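/- The ball B(4) is contained in the toric domain X₀ over Ω₀, and the ellipsoid E(3√3, 3√3/2) is contained in X₀; equivalently, in moment-map coordinates, the triangle {x + y ≤ 4, x,y ≥ 0} and the triangle {x/(3√3) + 2y/(3√3) ≤ 1, x,y ≥ 0} are both contained in Ω₀. -/

import Mathlib

open Real

/-- The region Ω₀ bounded by the coordinate axes and the curve
γ(α) = (2sin(α/2) − α cos(α/2), 2sin(α/2) + (2π − α)cos(α/2)): a point of the
first quadrant lies in Ω₀ iff it is (weakly) below some point of the curve. -/
def Omega0 : Set (ℝ × ℝ) :=
  {z | 0 ≤ z.1 ∧ 0 ≤ z.2 ∧ ∃ α ∈ Set.Icc (0:ℝ) (2*π),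
    z.1 ≤ 2 * Real.sin (α/2) - α * Real.cos (α/2) ∧
    z.2 ≤ 2 * Real.sin (α/2) + (2*π - α) * Real.cos (α/2)}

private lemma hasDerivAt_aux (a b t : ℝ) :
    HasDerivAt (fun t => a * Real.sin t + (b - a * t) * Real.cos t)
      (-((b - a * t) * Real.sin t)) t := by
  have h1 : HasDerivAt (fun t : ℝ => a * Real.sin t) (a * Real.cos t) t :=
    (Real.hasDerivAt_sin t).const_mul a
  have h2 : HasDerivAt (fun t : ℝ => b - a * t) (-a) t := by
    simpa using ((hasDerivAt_id t).const_mul a).const_sub b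
  have h3 := h2.mul (Real.hasDerivAt_cos t)
  have := h1.add h3
  refine this.congr_deriv ?_
  ring

private lemma key (a b : ℝ) (ha : 0 < a) (hb : 0 ≤ b) (hba : b / a ≤ π)
    (t : ℝ) (ht : t ∈ Set.Icc 0 π) :
    a * Real.sin (b / a) ≤ a * Real.sin t + (b - a * t) * Real.cos t := by
  set f : ℝ → ℝ := fun t => a * Real.sin t + (b - a * t) * Real.cos t with hf
  have hdiff : ∀ s : ℝ, HasDerivAt f (-((b - a * s) * Real.sin s)) s :=
    fun s => hasDerivAt_aux a b s
  have hcont : Continuous f := by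
    have := fun s => (hdiff s).differentiableAt
    exact (Differentiable.continuous this)
  have hderiv : ∀ s : ℝ, deriv f s = -((b - a * s) * Real.sin s) :=
    fun s => (hdiff s).deriv
  have hba0 : 0 ≤ b / a := div_nonneg hb ha.le
  have hfba : f (b / a) = a * Real.sin (b / a) := by
    simp only [hf]
    have : b - a * (b / a) = 0 := by field_simp; ring
    rw [this]; ring
  rw [← hfba]
  rcases le_or_gt t (b / a) with hle | hlt
  · -- antitone on [0, b/a]
    have hanti : AntitoneOn f (Set.Icc 0 (b / a)) := by
      apply antitoneOn_of_deriv_nonpos (convex_Icc _ _) hcont.continuousOn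
      · intro s hs
        exact (hdiff s).differentiableAt.differentiableWithinAt
      · intro s hs
        rw [interior_Icc] at hs
        rw [hderiv s]
        have h1 : 0 ≤ b - a * s := by
          have : s ≤ b / a := hs.2.le
          have := (le_div_iff₀ ha).mp this
          linarith [mul_comm a s]
        have h2 : 0 ≤ Real.sin s := Real.sin_nonneg_of_nonneg_of_le_pi hs.1.le
          (le_trans hs.2.le hba)
        nlinarith
    exact hanti ⟨ht.1, hle⟩ ⟨hba0, le_refl _⟩ hle
  · -- monotone on [b/a, π]
    have hmono : MonotoneOn f (Set.Icc (b / a) π) := by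
      apply monotoneOn_of_deriv_nonneg (convex_Icc _ _) hcont.continuousOn
      · intro s hs
        exact (hdiff s).differentiableAt.differentiableWithinAt
      · intro s hs
        rw [interior_Icc] at hs
        rw [hderiv s]
        have h1 : b - a * s ≤ 0 := by
          have : b / a ≤ s := hs.1.le
          have := (div_le_iff₀ ha).mp this
          linarith [mul_comm s a]
        have h2 : 0 ≤ Real.sin s := Real.sin_nonneg_of_nonneg_of_le_pi
          (le_trans hba0 hs.1.le) hs.2.le
        nlinarith
    exact hmono ⟨le_refl _, hba⟩ ⟨hlt.le, ht.2⟩ hlt.le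

private lemma xcurve_surj {c : ℝ} (hc0 : 0 ≤ c) (hc : c ≤ 2 * π) :
    ∃ α ∈ Set.Icc (0:ℝ) (2*π), 2 * Real.sin (α/2) - α * Real.cos (α/2) = c := by
  set f : ℝ → ℝ := fun α => 2 * Real.sin (α/2) - α * Real.cos (α/2) with hf
  have hcont : Continuous f := by
    unfold f
    fun_prop
  have h0 : f 0 = 0 := by simp [hf]
  have h2pi : f (2 * π) = 2 * π := by
    have : (2 * π) / 2 = π := by ring
    simp [hf, this, Real.sin_pi, Real.cos_pi]
  have := intermediate_value_Icc (by positivity : (0:ℝ) ≤ 2 * π)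
    hcont.continuousOn
  rw [h0, h2pi] at this
  obtain ⟨α, hα, hfα⟩ := this ⟨hc0, hc⟩
  exact ⟨α, hα, hfα⟩

theorem stmt17 :
    (∀ z : ℝ × ℝ, 0 ≤ z.1 → 0 ≤ z.2 → z.1 + z.2 ≤ 4 → z ∈ Omega0) ∧
    (∀ z : ℝ × ℝ, 0 ≤ z.1 → 0 ≤ z.2 →
      z.1 / (3 * Real.sqrt 3) + 2 * z.2 / (3 * Real.sqrt 3) ≤ 1 → z ∈ Omega0) := by
  have hpi : (3:ℝ) < π := Real.pi_gt_three
  have hs3 : Real.sqrt 3 < 2 := by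
    rw [show (2:ℝ) = Real.sqrt 4 by rw [show (4:ℝ) = 2^2 by norm_num, Real.sqrt_sq] ; norm_num]
    exact Real.sqrt_lt_sqrt (by norm_num) (by norm_num)
  have hs3pos : 0 < Real.sqrt 3 := Real.sqrt_pos.mpr (by norm_num)
  constructor
  · rintro ⟨x, y⟩ hx hy hxy
    refine ⟨hx, hy, ?_⟩
    obtain ⟨α, hα, hfα⟩ := xcurve_surj hx (by linarith)
    refine ⟨α, hα, le_of_eq hfα.symm, ?_⟩
    -- x(α) + y(α) = 4 sin(α/2) + (2π − 2α) cos(α/2) ≥ 4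
    have hkey := key 4 (2*π) (by norm_num) (by positivity)
      (by rw [div_le_iff₀] <;> [linarith ; norm_num]) (α/2)
      ⟨by linarith [hα.1], by linarith [hα.2]⟩
    have h4 : (4:ℝ) * Real.sin ((2*π)/4) = 4 := by
      rw [show (2*π)/4 = π/2 by ring, Real.sin_pi_div_two]; norm_num
    rw [h4] at hkey
    -- hkey : 4 ≤ 4 sin(α/2) + (2π − 4·(α/2)) cos(α/2)
    have : 4 ≤ (2 * Real.sin (α/2) - α * Real.cos (α/2)) +
        (2 * Real.sin (α/2) + (2*π - α) * Real.cos (α/2)) := by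
      have e : (2 * Real.sin (α/2) - α * Real.cos (α/2)) +
          (2 * Real.sin (α/2) + (2*π - α) * Real.cos (α/2))
          = 4 * Real.sin (α/2) + (2*π - 4 * (α/2)) * Real.cos (α/2) := by ring
      rw [e]; exact hkey
    linarith [hfα]
  · rintro ⟨x, y⟩ hx hy hxy
    refine ⟨hx, hy, ?_⟩
    have h33 : (0:ℝ) < 3 * Real.sqrt 3 := by positivity
    have hxy' : x + 2 * y ≤ 3 * Real.sqrt 3 := by
      have := (add_div x (2*y)) -- not needed
      rw [← add_div, div_le_one h33] at hxy
      linarith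
    have hx2pi : x ≤ 2 * π := by nlinarith
    obtain ⟨α, hα, hfα⟩ := xcurve_surj hx hx2pi
    refine ⟨α, hα, le_of_eq hfα.symm, ?_⟩
    -- x(α) + 2 y(α) = 6 sin(α/2) + (4π − 6·(α/2)) cos(α/2) ≥ 6 sin(2π/3) = 3√3
    have hkey := key 6 (4*π) (by norm_num) (by positivity)
      (by rw [div_le_iff₀] <;> [linarith ; norm_num]) (α/2)
      ⟨by linarith [hα.1], by linarith [hα.2]⟩
    have h6 : (6:ℝ) * Real.sin ((4*π)/6) = 3 * Real.sqrt 3 := by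
      rw [show (4*π)/6 = π - π/3 by ring, Real.sin_pi_sub, Real.sin_pi_div_three]
      ring
    rw [h6] at hkey
    have e : (2 * Real.sin (α/2) - α * Real.cos (α/2)) +
        2 * (2 * Real.sin (α/2) + (2*π - α) * Real.cos (α/2))
        = 6 * Real.sin (α/2) + (4*π - 6 * (α/2)) * Real.cos (α/2) := by ring
    nlinarith [hkey, hfα, e]
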